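/- Let V be a group variety and n ≥ 1. The set of isomorphism types of n-marked V-groups is clopen in G_n (with the Stone topology) if and only if the relatively free group of rank n in V is finitely presented. -/

import Mathlib

open FirstOrder FirstOrder.Language

universe u v

/-- An `L`-structure is *minimal* if it has no proper substructure; equivalently,
it is generated by the empty set. -/
def FirstOrder.Language.IsMinimal (L : FirstOrder.Language.{u, v}) (M : Type w) [L.Structure M] :
    Prop :=
  Substructure.closure L (∅ : Set M) = ⊤

/-- `qf L M` is the quantifier-free theory of `M`: the set of quantifier-free
`L`-sentences true in `M`. -/
def FirstOrder.Language.qf (L : FirstOrder.Language.{u, v}) (M : Type w) [L.Structure M] :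
    Set L.Sentence :=
  {φ : L.Sentence | BoundedFormula.IsQF φ ∧ M ⊨ φ}

/-- `SL L` is the set of isomorphism types of minimal `L`-structures, identified with
the quantifier-free theories of minimal `L`-structures (equivalently, with the maximal
finitely satisfiable sets of quantifier-free `L`-sentences). -/
def SL (L : FirstOrder.Language.{u, v}) : Type (max u v) :=
  {S : Set L.Sentence // ∃ (M : Type (max u v)) (_ : L.Structure M), L.IsMinimal M ∧ S = L.qf M}

/-- The basic set `U_φ = {S ∈ S_L : φ ∈ S}`. -/
def USet {L : FirstOrder.Language.{u, v}} (φ : L.Sentence) : Set (SL L) :=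
  {S : SL L | φ ∈ S.1}

/-- The Stone topology `τ` on `S_L`, with basis `{U_φ : φ ∈ QF(L)}`. -/
instance stoneTopology (L : FirstOrder.Language.{u, v}) : TopologicalSpace (SL L) :=
  TopologicalSpace.generateFrom
    {V : Set (SL L) | ∃ φ : L.Sentence, BoundedFormula.IsQF φ ∧ V = USet φ}

/-- The function symbols of the language of groups: a binary multiplication, a unary inverse and
a constant `e`. -/
def grpFun : ℕ → Type
  | 0 => Unit
  | 1 => Unit
  | 2 => Unit
  | _ => Empty

/-- The first-order language `L₀ = {·, ⁻¹, e}` of groups. -/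
def grpL : FirstOrder.Language.{0, 0} := ⟨grpFun, fun _ => Empty⟩

/-- The multiplication of a structure for the language of groups with constants. -/
noncomputable def gmul (C : Type) {M : Type} [(grpL[[C]]).Structure M] (x y : M) : M :=
  Structure.funMap (L := grpL[[C]]) (Sum.inl (α := grpL.Functions 2) (() : grpFun 2)) ![x, y]

/-- The inverse operation of a structure for the language of groups with constants. -/
noncomputable def ginv (C : Type) {M : Type} [(grpL[[C]]).Structure M] (x : M) : M :=
  Structure.funMap (L := grpL[[C]]) (Sum.inl (α := grpL.Functions 1) (() : grpFun 1)) ![x]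

/-- The identity element of a structure for the language of groups with constants. -/
noncomputable def gone (C : Type) (M : Type) [(grpL[[C]]).Structure M] : M :=
  Structure.funMap (L := grpL[[C]]) (Sum.inl (α := grpL.Functions 0) (() : grpFun 0)) ![]

/-- The `L₀`-reduct of `M` is a group. -/
def IsGroupReduct (C : Type) (M : Type) [(grpL[[C]]).Structure M] : Prop :=
  (∀ x y z : M, gmul C (gmul C x y) z = gmul C x (gmul C y z)) ∧
  (∀ x : M, gmul C (gone C M) x = x) ∧ (∀ x : M, gmul C x (gone C M) = x) ∧
  (∀ x : M, gmul C (ginv C x) x = gone C M) ∧ (∀ x : M, gmul C x (ginv C x) = gone C M)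

/-- `G_C`, the set of isomorphism types of `C`-marked groups: quantifier-free theories of
minimal `grpL[[C]]`-structures whose `L₀`-reduct is a group. -/
def GC (C : Type) : Set (SL (grpL[[C]])) :=
  {S : SL (grpL[[C]]) |
    ∃ (M : Type) (_ : (grpL[[C]]).Structure M),
      (grpL[[C]]).IsMinimal M ∧ IsGroupReduct C M ∧ S.1 = (grpL[[C]]).qf M}

/-- A group `G` lies in the variety determined by a set `W ⊆ F_∞` of group identities iff
`φ w = 1` for every `w ∈ W` and every homomorphism `φ : F_∞ → G`. -/
def InVariety (W : Set (FreeGroup ℕ)) (G : Type*) [Group G] : Prop :=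
  ∀ w ∈ W, ∀ φ : FreeGroup ℕ →* G, φ w = 1

/-- The set of isomorphism types of `n`-marked `V`-groups, as a subset of the space `G_n` of
isomorphism types of `n`-marked groups (`V` is the variety determined by `W`). -/
def markedVGroups (n : ℕ) (W : Set (FreeGroup ℕ)) : Set (GC (Fin n)) :=
  {S : GC (Fin n) |
    ∃ (M : Type) (_ : Group M) (_ : (grpL[[Fin n]]).Structure M),
      (∀ x y : M, gmul (Fin n) x y = x * y) ∧ (∀ x : M, ginv (Fin n) x = x⁻¹) ∧
      gone (Fin n) M = 1 ∧
      (grpL[[Fin n]]).IsMinimal M ∧ InVariety W M ∧ S.1.1 = (grpL[[Fin n]]).qf M}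

/-- The verbal subgroup `V(F_n)` of the free group of rank `n` determined by the set of
identities `W`: the (normal) subgroup generated by all images `φ w`, `w ∈ W`,
`φ : F_∞ → F_n` a homomorphism. -/
def verbalSubgroup (n : ℕ) (W : Set (FreeGroup ℕ)) : Subgroup (FreeGroup (Fin n)) :=
  Subgroup.normalClosure
    {x : FreeGroup (Fin n) | ∃ w ∈ W, ∃ φ : FreeGroup ℕ →* FreeGroup (Fin n), φ w = x}

instance (n : ℕ) (W : Set (FreeGroup ℕ)) : (verbalSubgroup n W).Normal :=
  Subgroup.normalClosure_normal

/-- The relatively free group of rank `n` in the variety determined by `W`,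
namely `F_n / V(F_n)`. -/
abbrev relativelyFree (n : ℕ) (W : Set (FreeGroup ℕ)) : Type :=
  FreeGroup (Fin n) ⧸ verbalSubgroup n W

/-- A group is finitely presented if it is isomorphic to the quotient of a finitely generated
free group by the normal closure of a finite set. -/
def IsFinitelyPresentedGroup (G : Type*) [Group G] : Prop :=
  ∃ (m : ℕ) (rels : Finset (FreeGroup (Fin m))),
    Nonempty (G ≃* FreeGroup (Fin m) ⧸ Subgroup.normalClosure (rels : Set (FreeGroup (Fin m))))

/-! ### Auxiliary development -/

section Aux

open Function

/-- The marking of a `grpL[[C]]`-structure: the interpretations of the constants. -/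
noncomputable def marking (C : Type) {M : Type} [(grpL[[C]]).Structure M] (c : C) : M :=
  Structure.funMap (L := grpL[[C]]) (Sum.inr c : (grpL[[C]]).Functions 0) ![]

/-- The structure on a group `G` given by a marking `s`. -/
noncomputable def markStructure (C : Type) (G : Type) [Group G] (s : C → G) :
    (grpL[[C]]).Structure G where
  funMap {k} f v :=
    match k, f, v with
    | 0, Sum.inl _, _ => 1
    | 0, Sum.inr c, _ => s c
    | 1, Sum.inl _, v => (v 0)⁻¹
    | 2, Sum.inl _, v => v 0 * v 1
    | (_+3), Sum.inl f, _ => f.elim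
    | (_+1), Sum.inr c, _ => c.elim
  RelMap {k} r _ := (by rcases r with r | r; exacts [r.elim, r.elim] : False).elim

section Compat

variable {C : Type} {G : Type} [Group G] [(grpL[[C]]).Structure G]

theorem funMap_zero_inl (ho : gone C G = 1) (v : Fin 0 → G) :
    Structure.funMap (L := grpL[[C]]) (Sum.inl (α := grpL.Functions 0) (() : grpFun 0)) v = 1 := by
  rw [← ho, gone]; congr; funext i; exact i.elim0

theorem funMap_zero_inr (c : C) (v : Fin 0 → G) :
    Structure.funMap (L := grpL[[C]]) (Sum.inr c : (grpL[[C]]).Functions 0) v = marking C c := by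
  rw [marking]; congr; funext i; exact i.elim0

theorem funMap_one_inl (hi : ∀ x : G, ginv C x = x⁻¹) (v : Fin 1 → G) :
    Structure.funMap (L := grpL[[C]]) (Sum.inl (α := grpL.Functions 1) (() : grpFun 1)) v = (v 0)⁻¹ := by
  rw [← hi (v 0), ginv]; congr; funext i; fin_cases i; rfl

theorem funMap_two_inl (hm : ∀ x y : G, gmul C x y = x * y) (v : Fin 2 → G) :
    Structure.funMap (L := grpL[[C]]) (Sum.inl (α := grpL.Functions 2) (() : grpFun 2)) v = v 0 * v 1 := by
  rw [← hm (v 0) (v 1), gmul]; congr; funext i; fin_cases i <;> rfl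

end Compat

theorem markStructure_compat_mul (C : Type) (G : Type) [Group G] (s : C → G) (x y : G) :
    @gmul C G (markStructure C G s) x y = x * y := rfl

theorem markStructure_compat_inv (C : Type) (G : Type) [Group G] (s : C → G) (x : G) :
    @ginv C G (markStructure C G s) x = x⁻¹ := rfl

theorem markStructure_compat_one (C : Type) (G : Type) [Group G] (s : C → G) :
    @gone C G (markStructure C G s) = 1 := rfl

theorem markStructure_marking (C : Type) (G : Type) [Group G] (s : C → G) (c : C) :
    @marking C G (markStructure C G s) c = s c := rfl

end Aux

section Terms

variable {C : Type} [DecidableEq C]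

/-- Closed terms of the language of marked groups. -/
abbrev GTerm (C : Type) := (grpL[[C]]).Term (Empty ⊕ Fin 0)

noncomputable def oneT : GTerm C := Term.func (Sum.inl (α := grpL.Functions 0) (() : grpFun 0)) ![]
noncomputable def constT (c : C) : GTerm C :=
  Term.func (Sum.inr c : (grpL[[C]]).Functions 0) ![]
noncomputable def invT (t : GTerm C) : GTerm C := Term.func (Sum.inl (α := grpL.Functions 1) (() : grpFun 1)) ![t]
noncomputable def mulT (t₁ t₂ : GTerm C) : GTerm C :=
  Term.func (Sum.inl (α := grpL.Functions 2) (() : grpFun 2)) ![t₁, t₂]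

/-- The closed term associated to a word. -/
noncomputable def termOfList : List (C × Bool) → GTerm C
  | [] => oneT
  | (c, true) :: l => mulT (constT c) (termOfList l)
  | (c, false) :: l => mulT (invT (constT c)) (termOfList l)

/-- The closed term associated to an element of the free group. -/
noncomputable def termOf (g : FreeGroup C) : GTerm C := termOfList g.toWord

/-- The sentence asserting that the word `g` in the marked generators equals `1`. -/
noncomputable def senOf (g : FreeGroup C) : (grpL[[C]]).Sentence :=
  Term.bdEqual (termOf g) oneT

theorem senOf_isQF (g : FreeGroup C) : BoundedFormula.IsQF (senOf g) :=
  (BoundedFormula.IsAtomic.equal _ _).isQF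

section Realize

variable {G : Type} [Group G] [(grpL[[C]]).Structure G]
  (hm : ∀ x y : G, gmul C x y = x * y) (hi : ∀ x : G, ginv C x = x⁻¹)
  (ho : gone C G = 1)

include ho in
theorem realize_oneT (v : Empty ⊕ Fin 0 → G) : (oneT (C := C)).realize v = 1 := by
  simp only [oneT, Term.realize_func]
  exact funMap_zero_inl ho _

theorem realize_constT (c : C) (v : Empty ⊕ Fin 0 → G) :
    (constT c).realize v = marking C c := by
  simp only [constT, Term.realize_func]
  exact funMap_zero_inr c _

include hi in
theorem realize_invT (t : GTerm C) (v : Empty ⊕ Fin 0 → G) :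
    (invT t).realize v = (t.realize v)⁻¹ := by
  simp only [invT, Term.realize_func]
  refine (funMap_one_inl hi _).trans ?_
  simp

include hm in
theorem realize_mulT (t₁ t₂ : GTerm C) (v : Empty ⊕ Fin 0 → G) :
    (mulT t₁ t₂).realize v = t₁.realize v * t₂.realize v := by
  simp only [mulT, Term.realize_func]
  refine (funMap_two_inl hm _).trans ?_
  simp

include hm hi ho in
theorem realize_termOfList (l : List (C × Bool)) (v : Empty ⊕ Fin 0 → G) :
    (termOfList l).realize v =
      (l.map fun p => cond p.2 (marking C p.1) (marking C p.1)⁻¹).prod := by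
  induction l with
  | nil => simpa [termOfList] using realize_oneT ho v
  | cons p l ih =>
    rcases p with ⟨c, b⟩
    cases b <;>
      simp [termOfList, realize_mulT hm, realize_invT hi, realize_constT, ih]

include hm hi ho in
theorem realize_termOf (g : FreeGroup C) (v : Empty ⊕ Fin 0 → G) :
    (termOf g).realize v = FreeGroup.lift (marking C) g := by
  rw [termOf, realize_termOfList hm hi ho, ← FreeGroup.lift_mk, FreeGroup.mk_toWord]

include hm hi ho in
theorem realize_senOf (g : FreeGroup C) :
    G ⊨ senOf g ↔ FreeGroup.lift (marking C (M := G)) g = 1 := by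
  rw [senOf, Sentence.Realize, Formula.Realize, BoundedFormula.realize_bdEqual,
    realize_termOf hm hi ho, realize_oneT ho]

end Realize

end Terms

section Minimal

variable {C : Type} {G : Type} [Group G] [(grpL[[C]]).Structure G]

/-- A subgroup containing the marking, viewed as a substructure. -/
noncomputable def subgroupSubstructure (hm : ∀ x y : G, gmul C x y = x * y)
    (hi : ∀ x : G, ginv C x = x⁻¹) (ho : gone C G = 1)
    (H : Subgroup G) (hs : Set.range (marking C (M := G)) ⊆ H) :
    (grpL[[C]]).Substructure G where
  carrier := H
  fun_mem := by
    rintro k (f | c) v hv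
    · match k, f with
      | 0, () => rw [funMap_zero_inl ho]; exact H.one_mem
      | 1, () => rw [funMap_one_inl hi]; exact H.inv_mem (hv 0)
      | 2, () => rw [funMap_two_inl hm]; exact H.mul_mem (hv 0) (hv 1)
      | (k+3), f => exact f.elim
    · match k, c with
      | 0, c => exact (congrArg (· ∈ (H : Set G)) (funMap_zero_inr (C := C) c v)).mpr (hs ⟨c, rfl⟩)
      | (k+1), c => exact c.elim

variable (hm : ∀ x y : G, gmul C x y = x * y) (hi : ∀ x : G, ginv C x = x⁻¹)
  (ho : gone C G = 1)

include hm hi ho in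
theorem isMinimal_iff_closure :
    (grpL[[C]]).IsMinimal G ↔ Subgroup.closure (Set.range (marking C (M := G))) = ⊤ := by
  have hfm : ∀ (x : G), x ∈ Substructure.closure (grpL[[C]]) (∅ : Set G) →
      ∀ (y : G), y ∈ Substructure.closure (grpL[[C]]) (∅ : Set G) →
      x * y ∈ Substructure.closure (grpL[[C]]) (∅ : Set G) := by
    intro x hx y hy
    have := (Substructure.closure (grpL[[C]]) (∅ : Set G)).fun_mem
      (Sum.inl (α := grpL.Functions 2) (() : grpFun 2)) ![x, y] (by intro i; fin_cases i <;> assumption)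
    rwa [funMap_two_inl hm] at this
  have hfi : ∀ (x : G), x ∈ Substructure.closure (grpL[[C]]) (∅ : Set G) →
      x⁻¹ ∈ Substructure.closure (grpL[[C]]) (∅ : Set G) := by
    intro x hx
    have := (Substructure.closure (grpL[[C]]) (∅ : Set G)).fun_mem
      (Sum.inl (α := grpL.Functions 1) (() : grpFun 1)) ![x] (by intro i; fin_cases i; assumption)
    rwa [funMap_one_inl hi] at this
  have hfo : (1 : G) ∈ Substructure.closure (grpL[[C]]) (∅ : Set G) := by
    have := (Substructure.closure (grpL[[C]]) (∅ : Set G)).fun_mem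
      (Sum.inl (α := grpL.Functions 0) (() : grpFun 0)) ![] (by intro i; exact i.elim0)
    rwa [funMap_zero_inl ho] at this
  constructor
  · intro h
    rw [eq_top_iff]
    intro x _
    have hle : Substructure.closure (grpL[[C]]) (∅ : Set G) ≤
        subgroupSubstructure hm hi ho
          (Subgroup.closure (Set.range (marking C (M := G)))) Subgroup.subset_closure :=
      Substructure.closure_le.2 (Set.empty_subset _)
    rw [FirstOrder.Language.IsMinimal] at h
    rw [h] at hle
    exact hle (Substructure.mem_top x)
  · intro h
    let K : Subgroup G :=
      { carrier := (Substructure.closure (grpL[[C]]) (∅ : Set G) : Set G)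
        one_mem' := hfo
        mul_mem' := fun ha hb => hfm _ ha _ hb
        inv_mem' := fun ha => hfi _ ha }
    have hr : Set.range (marking C (M := G)) ⊆ K := by
      rintro x ⟨c, rfl⟩
      have := (Substructure.closure (grpL[[C]]) (∅ : Set G)).fun_mem
        (Sum.inr c : (grpL[[C]]).Functions 0) ![] (by intro i; exact i.elim0)
      rwa [funMap_zero_inr] at this
    have hK : ∀ x : G, x ∈ K := by
      intro x
      have h2 : (⊤ : Subgroup G) ≤ K := h ▸ (Subgroup.closure_le K).2 hr
      exact h2 (Subgroup.mem_top x)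
    rw [FirstOrder.Language.IsMinimal, eq_top_iff]
    intro x _
    exact hK x

end Minimal

section Variety

variable {n : ℕ} {G : Type} [Group G] [(grpL[[Fin n]]).Structure G]

theorem inVariety_lift_eq_one (hv : InVariety W G) {g : FreeGroup (Fin n)}
    (hg : g ∈ verbalSubgroup n W) : FreeGroup.lift (marking (Fin n) (M := G)) g = 1 := by
  have : verbalSubgroup n W ≤ (FreeGroup.lift (marking (Fin n) (M := G))).ker := by
    apply Subgroup.normalClosure_le_normal
    rintro x ⟨w, hw, φ, rfl⟩
    have : ((FreeGroup.lift (marking (Fin n) (M := G))).comp φ) w = 1 := hv w hw _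
    simpa using this
  exact this hg

theorem inVariety_of_lift (hsurj : Function.Surjective (FreeGroup.lift (marking (Fin n) (M := G))))
    (h : ∀ g ∈ verbalSubgroup n W, FreeGroup.lift (marking (Fin n) (M := G)) g = 1) :
    InVariety W G := by
  intro w hw φ
  choose t ht using fun k => hsurj (φ (FreeGroup.of k))
  have hψ : (FreeGroup.lift (marking (Fin n) (M := G))).comp (FreeGroup.lift t) = φ :=
    FreeGroup.ext_hom _ _ (by simp [ht])
  have hmem : (FreeGroup.lift t) w ∈ verbalSubgroup n W :=
    Subgroup.subset_normalClosure ⟨w, hw, FreeGroup.lift t, rfl⟩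
  calc φ w = FreeGroup.lift (marking (Fin n) (M := G)) ((FreeGroup.lift t) w) := by
        rw [← hψ]; rfl
    _ = 1 := h _ hmem

end Variety

section GroupOfReduct

/-- A group structure on a structure whose reduct is a group. -/
noncomputable def groupOfReduct {C M : Type} [(grpL[[C]]).Structure M]
    (h : IsGroupReduct C M) : Group M :=
  letI : Mul M := ⟨gmul C⟩
  letI : One M := ⟨gone C M⟩
  letI : Inv M := ⟨ginv C⟩
  Group.ofLeftAxioms h.1 h.2.1 h.2.2.2.1

theorem groupOfReduct_compat {C M : Type} [(grpL[[C]]).Structure M] (h : IsGroupReduct C M) :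
    (∀ x y : M, gmul C x y = (letI := groupOfReduct h; x * y)) ∧
      (∀ x : M, ginv C x = (letI := groupOfReduct h; x⁻¹)) ∧
      gone C M = (letI := groupOfReduct h; (1 : M)) :=
  ⟨fun _ _ => rfl, fun _ => rfl, rfl⟩

end GroupOfReduct

section Membership

variable {n : ℕ} {W : Set (FreeGroup ℕ)}

theorem lift_marking_surjective {M : Type} [Group M] [(grpL[[Fin n]]).Structure M]
    (hm : ∀ x y : M, gmul (Fin n) x y = x * y) (hi : ∀ x : M, ginv (Fin n) x = x⁻¹)
    (ho : gone (Fin n) M = 1) (hmin : (grpL[[Fin n]]).IsMinimal M) :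
    Function.Surjective (FreeGroup.lift (marking (Fin n) (M := M))) := by
  rw [← MonoidHom.range_eq_top, FreeGroup.range_lift_eq_closure]
  exact (isMinimal_iff_closure hm hi ho).1 hmin

theorem mem_markedVGroups_iff_of_ncl {T : Set (FreeGroup (Fin n))}
    (hT : Subgroup.normalClosure T = verbalSubgroup n W) (S : ↥(GC (Fin n))) :
    S ∈ markedVGroups n W ↔ ∀ g ∈ T, senOf g ∈ S.1.1 := by
  constructor
  · rintro ⟨M, grp, str, hm, hi, ho, hmin, hvar, hS⟩ g hg
    have hg' : g ∈ verbalSubgroup n W := hT ▸ Subgroup.subset_normalClosure hg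
    rw [hS]
    exact ⟨senOf_isQF g, (realize_senOf hm hi ho g).2 (inVariety_lift_eq_one hvar hg')⟩
  · intro h
    obtain ⟨M, str, hmin, hred, hS⟩ := S.2
    letI grp := groupOfReduct hred
    have hm : ∀ x y : M, gmul (Fin n) x y = x * y := fun _ _ => rfl
    have hi : ∀ x : M, ginv (Fin n) x = x⁻¹ := fun _ => rfl
    have ho : gone (Fin n) M = 1 := rfl
    have hker : verbalSubgroup n W ≤ (FreeGroup.lift (marking (Fin n) (M := M))).ker := by
      rw [← hT]
      apply Subgroup.normalClosure_le_normal
      intro g hg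
      have := h g hg
      rw [hS] at this
      exact (realize_senOf hm hi ho g).1 this.2
    have hvar : InVariety W M :=
      inVariety_of_lift (lift_marking_surjective hm hi ho hmin) fun g hg => hker hg
    exact ⟨M, grp, str, hm, hi, ho, hmin, hvar, hS⟩

theorem mem_markedVGroups_iff (S : ↥(GC (Fin n))) :
    S ∈ markedVGroups n W ↔ ∀ g ∈ verbalSubgroup n W, senOf g ∈ S.1.1 :=
  mem_markedVGroups_iff_of_ncl (Subgroup.normalClosure_eq_self _) S

end Membership

section Topology

theorem isOpen_USet {L : FirstOrder.Language.{u, v}} {φ : L.Sentence}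
    (hφ : BoundedFormula.IsQF φ) : IsOpen (USet φ) :=
  TopologicalSpace.GenerateOpen.basic _ ⟨φ, hφ, rfl⟩

theorem compl_USet {L : FirstOrder.Language.{u, v}} {φ : L.Sentence}
    (hφ : BoundedFormula.IsQF φ) : (USet φ)ᶜ = USet φ.not := by
  ext S
  obtain ⟨M, str, hmin, hqf⟩ := S.2
  simp only [USet, Set.mem_compl_iff, Set.mem_setOf_eq, hqf,
    FirstOrder.Language.qf, Sentence.realize_not]
  constructor
  · intro h
    exact ⟨hφ.not, fun h' => h ⟨hφ, h'⟩⟩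
  · rintro ⟨-, h⟩ ⟨-, h'⟩
    exact h h'

theorem isClopen_USet {L : FirstOrder.Language.{u, v}} {φ : L.Sentence}
    (hφ : BoundedFormula.IsQF φ) : IsClopen (USet φ) :=
  ⟨⟨by rw [compl_USet hφ]; exact isOpen_USet hφ.not⟩, isOpen_USet hφ⟩

variable {n : ℕ} {W : Set (FreeGroup ℕ)}

theorem markedVGroups_eq_preimage {T : Set (FreeGroup (Fin n))}
    (hT : Subgroup.normalClosure T = verbalSubgroup n W) :
    markedVGroups n W = Subtype.val ⁻¹' (⋂ g ∈ T, USet (senOf g)) := by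
  ext S
  rw [Set.mem_preimage, Set.mem_iInter₂]
  exact mem_markedVGroups_iff_of_ncl hT S

theorem markedVGroups_isClosed : IsClosed (markedVGroups n W) := by
  rw [markedVGroups_eq_preimage (Subgroup.normalClosure_eq_self _)]
  exact (isClosed_biInter fun g _ => (isClopen_USet (senOf_isQF g)).isClosed).preimage
    continuous_subtype_val

theorem markedVGroups_isOpen_of_finite {T : Set (FreeGroup (Fin n))} (hfin : T.Finite)
    (hT : Subgroup.normalClosure T = verbalSubgroup n W) : IsOpen (markedVGroups n W) := by
  rw [markedVGroups_eq_preimage hT]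
  exact (hfin.isOpen_biInter fun g _ => (isClopen_USet (senOf_isQF g)).isOpen).preimage
    continuous_subtype_val

end Topology

section Neumann

open Function

/-- B.H. Neumann's lemma: if a group has a finite presentation, the kernel of any surjection
from a finitely generated free group onto it is the normal closure of a finite set. -/
theorem neumann {m k : ℕ} {H : Type*} [Group H] (π : FreeGroup (Fin m) →* H)
    (q : FreeGroup (Fin k) →* H) (hπ : Surjective π) (hq : Surjective q)
    (rels : Finset (FreeGroup (Fin m))) (hker : π.ker = Subgroup.normalClosure ↑rels) :
    ∃ T : Finset (FreeGroup (Fin k)), q.ker = Subgroup.normalClosure ↑T := by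
  classical
  choose af haf using fun i : Fin m => hq (π (FreeGroup.of i))
  choose bf hbf using fun j : Fin k => hπ (q (FreeGroup.of j))
  set a : FreeGroup (Fin m) →* FreeGroup (Fin k) := FreeGroup.lift af with ha
  set b : FreeGroup (Fin k) →* FreeGroup (Fin m) := FreeGroup.lift bf with hb
  have hqa : q.comp a = π := FreeGroup.ext_hom _ _ (by simp [ha, haf])
  have hπb : π.comp b = q := FreeGroup.ext_hom _ _ (by simp [hb, hbf])
  refine ⟨rels.image a ∪ Finset.univ.image (fun j : Fin k =>
    (FreeGroup.of j)⁻¹ * a (b (FreeGroup.of j))), ?_⟩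
  set T : Finset (FreeGroup (Fin k)) := rels.image a ∪ Finset.univ.image (fun j : Fin k =>
    (FreeGroup.of j)⁻¹ * a (b (FreeGroup.of j))) with hTdef
  set K := Subgroup.normalClosure (↑T : Set (FreeGroup (Fin k))) with hK
  apply le_antisymm
  · -- ker q ≤ K
    intro z hz
    have hbz : b z ∈ π.ker := by
      rw [MonoidHom.mem_ker, ← MonoidHom.comp_apply, hπb]
      exact hz
    rw [hker] at hbz
    have habz : a (b z) ∈ K := by
      have h1 : Subgroup.normalClosure (↑rels : Set (FreeGroup (Fin m))) ≤
          Subgroup.comap a K := by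
        apply Subgroup.normalClosure_le_normal
        intro r hr
        rw [SetLike.mem_coe, Subgroup.mem_comap]
        apply Subgroup.subset_normalClosure
        rw [hTdef]
        exact Finset.mem_coe.2
          (Finset.mem_union_left _ (Finset.mem_image.2 ⟨r, Finset.mem_coe.1 hr, rfl⟩))
      exact h1 hbz
    -- z ≡ a (b z) mod K
    have hpz : (QuotientGroup.mk' K).comp (a.comp b) = QuotientGroup.mk' K := by
      apply FreeGroup.ext_hom
      intro j
      show QuotientGroup.mk' K (a (b (FreeGroup.of j))) = QuotientGroup.mk' K (FreeGroup.of j)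
      rw [QuotientGroup.mk'_apply, QuotientGroup.mk'_apply, eq_comm, QuotientGroup.eq]
      apply Subgroup.subset_normalClosure
      rw [hTdef]
      exact Finset.mem_coe.2
        (Finset.mem_union_right _ (Finset.mem_image.2 ⟨j, Finset.mem_univ j, rfl⟩))
    have : QuotientGroup.mk' K (a (b z)) = QuotientGroup.mk' K z := by
      have := DFunLike.congr_fun hpz z
      simpa using this
    have hz1 : QuotientGroup.mk' K z = 1 := by
      rw [← this, QuotientGroup.mk'_apply, QuotientGroup.eq_one_iff]
      exact habz
    rw [← QuotientGroup.ker_mk' K, MonoidHom.mem_ker]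
    exact hz1
  · -- K ≤ ker q
    apply Subgroup.normalClosure_le_normal
    intro x hx
    simp only [hTdef, Finset.coe_union, Set.mem_union, Finset.coe_image, Finset.coe_univ,
      Set.image_univ, Set.mem_range, Set.mem_image, Finset.mem_coe] at hx
    rcases hx with ⟨r, hr, rfl⟩ | ⟨j, rfl⟩
    · have : r ∈ π.ker := by rw [hker]; exact Subgroup.subset_normalClosure hr
      rw [SetLike.mem_coe, MonoidHom.mem_ker, ← MonoidHom.comp_apply q a, hqa]
      exact this
    · rw [SetLike.mem_coe, MonoidHom.mem_ker]
      have h1 : q (a (b (FreeGroup.of j))) = q (FreeGroup.of j) := by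
        rw [← MonoidHom.comp_apply q a, hqa, ← MonoidHom.comp_apply π b, hπb]
      simp [h1]
  
theorem exists_finset_ncl_of_fp {n : ℕ} {W : Set (FreeGroup ℕ)}
    (h : IsFinitelyPresentedGroup (relativelyFree n W)) :
    ∃ T : Finset (FreeGroup (Fin n)),
      Subgroup.normalClosure (↑T : Set (FreeGroup (Fin n))) = verbalSubgroup n W := by
  obtain ⟨m, rels, ⟨e⟩⟩ := h
  set π : FreeGroup (Fin m) →* FreeGroup (Fin m) ⧸ Subgroup.normalClosure
    (↑rels : Set (FreeGroup (Fin m))) := QuotientGroup.mk' _ with hπdef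
  set q : FreeGroup (Fin n) →* FreeGroup (Fin m) ⧸ Subgroup.normalClosure
    (↑rels : Set (FreeGroup (Fin m))) :=
    e.toMonoidHom.comp (QuotientGroup.mk' (verbalSubgroup n W)) with hqdef
  have hq : Surjective q := e.surjective.comp (QuotientGroup.mk'_surjective _)
  have hkerq : q.ker = verbalSubgroup n W := by
    ext x
    simp only [hqdef, MonoidHom.mem_ker, MonoidHom.comp_apply, MulEquiv.coe_toMonoidHom]
    rw [EmbeddingLike.map_eq_one_iff, ← MonoidHom.mem_ker, QuotientGroup.ker_mk']
  obtain ⟨T, hT⟩ := neumann π q (QuotientGroup.mk'_surjective _) hq rels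
    (QuotientGroup.ker_mk' _)
  exact ⟨T, by rw [← hT, hkerq]⟩

end Neumann

section QuotPoints

variable {n : ℕ}

/-- The canonical marking of a quotient of the free group. -/
noncomputable abbrev quotStr (N : Subgroup (FreeGroup (Fin n))) [N.Normal] :
    (grpL[[Fin n]]).Structure (FreeGroup (Fin n) ⧸ N) :=
  markStructure (Fin n) _ (fun i => QuotientGroup.mk (FreeGroup.of i))

theorem quotStr_lift (N : Subgroup (FreeGroup (Fin n))) [N.Normal] :
    FreeGroup.lift (@marking (Fin n) _ (quotStr N)) = QuotientGroup.mk' N := by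
  apply FreeGroup.ext_hom
  intro i
  rw [FreeGroup.lift_apply_of]
  rfl

theorem quotStr_minimal (N : Subgroup (FreeGroup (Fin n))) [N.Normal] :
    @FirstOrder.Language.IsMinimal _ (FreeGroup (Fin n) ⧸ N) (quotStr N) := by
  letI := quotStr N
  have hm : ∀ x y : FreeGroup (Fin n) ⧸ N, gmul (Fin n) x y = x * y := fun _ _ => rfl
  have hi : ∀ x : FreeGroup (Fin n) ⧸ N, ginv (Fin n) x = x⁻¹ := fun _ => rfl
  have ho : gone (Fin n) (FreeGroup (Fin n) ⧸ N) = 1 := rfl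
  rw [isMinimal_iff_closure hm hi ho]
  rw [← FreeGroup.range_lift_eq_closure, quotStr_lift N]
  exact MonoidHom.range_eq_top_of_surjective _ (QuotientGroup.mk'_surjective N)

theorem quotStr_reduct (N : Subgroup (FreeGroup (Fin n))) [N.Normal] :
    @IsGroupReduct (Fin n) (FreeGroup (Fin n) ⧸ N) (quotStr N) := by
  letI := quotStr N
  exact ⟨fun x y z => mul_assoc x y z, fun x => one_mul x, fun x => mul_one x,
    fun x => inv_mul_cancel x, fun x => mul_inv_cancel x⟩

theorem quotStr_senOf_mem (N : Subgroup (FreeGroup (Fin n))) [N.Normal]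
    (g : FreeGroup (Fin n)) :
    senOf g ∈ @FirstOrder.Language.qf (grpL[[Fin n]]) (FreeGroup (Fin n) ⧸ N) (quotStr N) ↔
      g ∈ N := by
  letI := quotStr N
  have hm : ∀ x y : FreeGroup (Fin n) ⧸ N, gmul (Fin n) x y = x * y := fun _ _ => rfl
  have hi : ∀ x : FreeGroup (Fin n) ⧸ N, ginv (Fin n) x = x⁻¹ := fun _ => rfl
  have ho : gone (Fin n) (FreeGroup (Fin n) ⧸ N) = 1 := rfl
  constructor
  · rintro ⟨-, h⟩
    have := (realize_senOf hm hi ho g).1 h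
    rw [quotStr_lift N] at this
    rwa [QuotientGroup.mk'_apply, QuotientGroup.eq_one_iff] at this
  · intro h
    refine ⟨senOf_isQF g, (realize_senOf hm hi ho g).2 ?_⟩
    rw [quotStr_lift N, QuotientGroup.mk'_apply, QuotientGroup.eq_one_iff]
    exact h

/-- The point of `SL` given by a marked quotient of the free group. -/
noncomputable def SLquot (N : Subgroup (FreeGroup (Fin n))) [N.Normal] :
    SL (grpL[[Fin n]]) :=
  ⟨@FirstOrder.Language.qf (grpL[[Fin n]]) (FreeGroup (Fin n) ⧸ N) (quotStr N),
    ⟨FreeGroup (Fin n) ⧸ N, quotStr N, quotStr_minimal N, rfl⟩⟩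

theorem SLquot_mem_GC (N : Subgroup (FreeGroup (Fin n))) [N.Normal] :
    SLquot N ∈ GC (Fin n) :=
  ⟨FreeGroup (Fin n) ⧸ N, quotStr N, quotStr_minimal N, quotStr_reduct N, rfl⟩

/-- The point of `G_n` given by a marked quotient of the free group. -/
noncomputable def GCquot (N : Subgroup (FreeGroup (Fin n))) [N.Normal] : ↥(GC (Fin n)) :=
  ⟨SLquot N, SLquot_mem_GC N⟩

end QuotPoints

section WordOf

variable {C : Type}

/-- The group word associated to a closed term. -/
noncomputable def wordOf : (grpL[[C]]).Term (Empty ⊕ Fin 0) → FreeGroup C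
  | Term.var (Sum.inl e) => e.elim
  | Term.var (Sum.inr i) => i.elim0
  | @Term.func _ _ 0 (Sum.inl _) _ => 1
  | @Term.func _ _ 0 (Sum.inr c) _ => FreeGroup.of c
  | @Term.func _ _ 1 (Sum.inl _) ts => (wordOf (ts 0))⁻¹
  | @Term.func _ _ 2 (Sum.inl _) ts => wordOf (ts 0) * wordOf (ts 1)
  | @Term.func _ _ (_+3) (Sum.inl f) _ => f.elim
  | @Term.func _ _ (_+1) (Sum.inr c) _ => c.elim

variable {G : Type} [Group G] [(grpL[[C]]).Structure G]
  (hm : ∀ x y : G, gmul C x y = x * y) (hi : ∀ x : G, ginv C x = x⁻¹)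
  (ho : gone C G = 1)

include hm hi ho in
theorem realize_wordOf (t : (grpL[[C]]).Term (Empty ⊕ Fin 0)) (v : Empty ⊕ Fin 0 → G) :
    t.realize v = FreeGroup.lift (marking C (M := G)) (wordOf t) := by
  induction t with
  | var w => rcases w with w | w; exacts [w.elim, w.elim0]
  | @func l f ts ih =>
    rcases f with f | c
    · match l, f, ts, ih with
      | 0, (), ts, ih =>
        refine (funMap_zero_inl ho _).trans ?_
        simp [wordOf]
      | 1, (), ts, ih =>
        refine (funMap_one_inl hi _).trans ?_
        simp only [wordOf, map_inv, ih 0]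
      | 2, (), ts, ih =>
        refine (funMap_two_inl hm _).trans ?_
        simp only [wordOf, map_mul, ih 0, ih 1]
      | l+3, f, ts, ih => exact f.elim
    · match l, c, ts, ih with
      | 0, c, ts, ih =>
        refine (funMap_zero_inr (C := C) c _).trans ?_
        simp [wordOf]
        exact (FreeGroup.lift_apply_of (f := marking C (M := G)) (x := c)).symm
      | l+1, c, ts, ih => exact c.elim

end WordOf

section Convergence

variable {n : ℕ}

theorem quotStr_realize_equal (N : Subgroup (FreeGroup (Fin n))) [N.Normal]
    (t₁ t₂ : (grpL[[Fin n]]).Term (Empty ⊕ Fin 0)) :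
    (@Sentence.Realize _ (FreeGroup (Fin n) ⧸ N) (quotStr N) (Term.bdEqual t₁ t₂)) ↔
      (wordOf t₁)⁻¹ * wordOf t₂ ∈ N := by
  letI := quotStr N
  have hm : ∀ x y : FreeGroup (Fin n) ⧸ N, gmul (Fin n) x y = x * y := fun _ _ => rfl
  have hi : ∀ x : FreeGroup (Fin n) ⧸ N, ginv (Fin n) x = x⁻¹ := fun _ => rfl
  have ho : gone (Fin n) (FreeGroup (Fin n) ⧸ N) = 1 := rfl
  rw [Sentence.Realize, Formula.Realize, BoundedFormula.realize_bdEqual,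
    realize_wordOf hm hi ho t₁, realize_wordOf hm hi ho t₂, quotStr_lift N,
    QuotientGroup.mk'_apply, QuotientGroup.mk'_apply, QuotientGroup.eq]

theorem qf_eventually (Nseq : ℕ → Subgroup (FreeGroup (Fin n))) [∀ m, (Nseq m).Normal]
    (V : Subgroup (FreeGroup (Fin n))) [V.Normal] (hmono : Monotone Nseq)
    (hle : ∀ m, Nseq m ≤ V) (hexh : ∀ x ∈ V, ∃ m, x ∈ Nseq m)
    {φ : (grpL[[Fin n]]).Sentence} (hφ : BoundedFormula.IsQF φ) :
    ∃ m₀, ∀ m ≥ m₀,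
      ((@Sentence.Realize _ (FreeGroup (Fin n) ⧸ Nseq m) (quotStr (Nseq m)) φ) ↔
        (@Sentence.Realize _ (FreeGroup (Fin n) ⧸ V) (quotStr V) φ)) := by
  induction hφ with
  | falsum => exact ⟨0, fun m _ => Iff.rfl⟩
  | of_isAtomic h =>
    cases h with
    | equal t₁ t₂ =>
      by_cases hw : (wordOf t₁)⁻¹ * wordOf t₂ ∈ V
      · obtain ⟨m₀, hm₀⟩ := hexh _ hw
        refine ⟨m₀, fun m hm => ?_⟩
        rw [quotStr_realize_equal, quotStr_realize_equal]
        exact iff_of_true (hmono hm hm₀) hw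
      · refine ⟨0, fun m _ => ?_⟩
        rw [quotStr_realize_equal, quotStr_realize_equal]
        exact iff_of_false (fun h => hw (hle m h)) hw
    | rel R ts => rcases R with R | R; exacts [R.elim, R.elim]
  | imp h₁ h₂ ih₁ ih₂ =>
    obtain ⟨m₁, hm₁⟩ := ih₁
    obtain ⟨m₂, hm₂⟩ := ih₂
    refine ⟨max m₁ m₂, fun m hm => ?_⟩
    simp only [Sentence.Realize, Formula.Realize, BoundedFormula.realize_imp]
    exact imp_congr (hm₁ m (le_trans (le_max_left _ _) hm))
      (hm₂ m (le_trans (le_max_right _ _) hm))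

end Convergence

section Forward

theorem fp_of_isOpen {n : ℕ} {W : Set (FreeGroup ℕ)} (hopen : IsOpen (markedVGroups n W)) :
    IsFinitelyPresentedGroup (relativelyFree n W) := by
  classical
  haveI : Countable (FreeGroup (Fin n)) := FreeGroup.toWord_injective.countable
  obtain ⟨u, hu⟩ := exists_surjective_nat (FreeGroup (Fin n))
  set gs : ℕ → FreeGroup (Fin n) :=
    fun m => if u m ∈ verbalSubgroup n W then u m else 1 with hgs
  set Nseq : ℕ → Subgroup (FreeGroup (Fin n)) :=
    fun m => Subgroup.normalClosure ↑(Finset.image gs (Finset.range m)) with hNseq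
  haveI : ∀ m, (Nseq m).Normal := fun _ => Subgroup.normalClosure_normal
  have hmono : Monotone Nseq := by
    intro m m' h
    exact Subgroup.normalClosure_mono
      (Finset.coe_subset.2 (Finset.image_subset_image (Finset.range_subset_range.2 h)))
  have hle : ∀ m, Nseq m ≤ verbalSubgroup n W := by
    intro m
    apply Subgroup.normalClosure_le_normal
    intro x hx
    obtain ⟨j, -, rfl⟩ := Finset.mem_image.1 (Finset.mem_coe.1 hx)
    by_cases hj : u j ∈ verbalSubgroup n W
    · simpa [hgs, hj] using hj
    · simp only [hgs, hj, if_false]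
      exact Subgroup.one_mem _
  have hexh : ∀ x ∈ verbalSubgroup n W, ∃ m, x ∈ Nseq m := by
    intro x hx
    obtain ⟨j, rfl⟩ := hu x
    refine ⟨j + 1, Subgroup.subset_normalClosure ?_⟩
    refine Finset.mem_coe.2 (Finset.mem_image.2 ⟨j, Finset.self_mem_range_succ j, ?_⟩)
    simp [hgs, hx]
  -- the marked relatively free group lies in `markedVGroups`
  have hS₀ : GCquot (verbalSubgroup n W) ∈ markedVGroups n W := by
    rw [mem_markedVGroups_iff]
    intro g hg
    exact (quotStr_senOf_mem _ g).2 hg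
  obtain ⟨U, hU, hUeq⟩ := isOpen_induced_iff.1 hopen
  have hS₀U : (GCquot (verbalSubgroup n W)).1 ∈ U := by
    rw [← hUeq] at hS₀
    exact hS₀
  have hb := TopologicalSpace.isTopologicalBasis_of_subbasis
    (s := {V : Set (SL (grpL[[Fin n]])) |
      ∃ φ : (grpL[[Fin n]]).Sentence, BoundedFormula.IsQF φ ∧ V = USet φ}) rfl
  obtain ⟨t, ht, hS₀t, htU⟩ := hb.exists_subset_of_mem_open hS₀U hU
  obtain ⟨f, ⟨hfin, hfsub⟩, rfl⟩ := ht
  -- choose the defining quantifier-free sentences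
  choose φf hφfQF hφfeq using fun V (hV : V ∈ f) => hfsub hV
  -- all of them hold in the relatively free group
  have hR : ∀ V (hV : V ∈ f),
      @Sentence.Realize _ _ (quotStr (verbalSubgroup n W)) (φf V hV) := by
    intro V hV
    have := Set.mem_sInter.1 hS₀t V hV
    rw [hφfeq V hV] at this
    exact this.2
  -- eventually each of them holds in the approximating quotients
  have hevV : ∀ V (hV : V ∈ f), ∃ m₀, ∀ m ≥ m₀,
      @Sentence.Realize _ _ (quotStr (Nseq m)) (φf V hV) := by
    intro V hV
    obtain ⟨m₀, hm₀⟩ := qf_eventually Nseq (verbalSubgroup n W) hmono hle hexh (hφfQF V hV)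
    exact ⟨m₀, fun m hm => (hm₀ m hm).2 (hR V hV)⟩
  choose m₀f hm₀f using hevV
  set F := hfin.toFinset with hF
  have hmemF : ∀ V : {x // x ∈ F}, V.1 ∈ f := fun V => (Set.Finite.mem_toFinset hfin).1 V.2
  set M := F.attach.sup (fun V => m₀f V.1 (hmemF V)) with hM
  have hall : ∀ V (hV : V ∈ f), @Sentence.Realize _ _ (quotStr (Nseq M)) (φf V hV) := by
    intro V hV
    have hVF : V ∈ F := (Set.Finite.mem_toFinset hfin).2 hV
    have : m₀f V (hmemF ⟨V, hVF⟩) ≤ M :=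
      Finset.le_sup (f := fun V => m₀f V.1 (hmemF V)) (Finset.mem_attach F ⟨V, hVF⟩)
    exact hm₀f V hV M this
  -- the approximating point lies in `markedVGroups`
  have hmem : GCquot (Nseq M) ∈ markedVGroups n W := by
    rw [← hUeq]
    refine htU (Set.mem_sInter.2 fun V hV => ?_)
    rw [hφfeq V hV]
    exact ⟨hφfQF V hV, hall V hV⟩
  have heq : verbalSubgroup n W = Nseq M :=
    le_antisymm
      (fun g hg => (quotStr_senOf_mem _ g).1 ((mem_markedVGroups_iff _).1 hmem g hg))
      (hle M)
  rw [hNseq] at heq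
  exact ⟨n, Finset.image gs (Finset.range M),
    ⟨QuotientGroup.quotientMulEquivOfEq heq⟩⟩

end Forward

/-- **Corollary 2.8.** For a group variety `V` (determined by a set of identities `W`) and
`n ≥ 1`, the set of isomorphism types of `n`-marked `V`-groups is clopen in `G_n` if and only
if the relatively free group of rank `n` in `V` is finitely presented. -/
theorem markedVGroups_isClopen_iff (n : ℕ) (hn : 1 ≤ n) (W : Set (FreeGroup ℕ)) :
    IsClopen (markedVGroups n W) ↔ IsFinitelyPresentedGroup (relativelyFree n W) := by
  constructor
  · intro h
    exact fp_of_isOpen h.isOpen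
  · intro h
    obtain ⟨T, hT⟩ := exists_finset_ncl_of_fp h
    exact ⟨markedVGroups_isClosed, markedVGroups_isOpen_of_finite T.finite_toSet hT⟩
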